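/- Terracini's Lemma: Let X ⊆ P^r be an irreducible projective variety and let z be a general point of the secant variety SX lying on the line through two general points x, y ∈ X. Then the embedded tangent space T_zSX contains both T_xX and T_yX. -/

import Mathlib

/-!
Affine-cone framework for projective algebraic geometry.

A projective subvariety `X ⊆ ℙ^r` is encoded by its affine cone, a subset of the
vector space `ι → K` (with `ι = Fin (r+1)`).  Algebraicity is "being a zero locus of
polynomials", irreducibility is primality of the vanishing ideal, and the dimension
`adim` of a set is the Krull dimension of its affine coordinate ring (so the affine
cone over an `m`-dimensional projective variety has `adim = m + 1`).  Embedded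
(Zariski) tangent spaces are defined by differentiating all polynomials of the
vanishing ideal; at a smooth point of the cone this is the affine cone over the
embedded projective tangent space.
-/

open MvPolynomial

variable {K : Type} [Field K] {ι : Type} [Fintype ι]

/-- The vanishing ideal of a subset of affine space `ι → K`. -/
noncomputable def vIdeal (V : Set (ι → K)) : Ideal (MvPolynomial ι K) where
  carrier := {p | ∀ x ∈ V, eval x p = 0}
  add_mem' := by
    intro a b ha hb x hx
    simp [map_add, ha x hx, hb x hx]
  zero_mem' := by intro x hx; simp
  smul_mem' := by
    intro c p hp x hx
    simp [smul_eq_mul, hp x hx]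

/-- `V` is a (Zariski-closed) algebraic subset of affine space. -/
def IsAlg (V : Set (ι → K)) : Prop :=
  ∃ S : Set (MvPolynomial ι K), V = {x | ∀ p ∈ S, eval x p = 0}

/-- Dimension of an algebraic set: the Krull dimension of its coordinate ring. -/
noncomputable def adim (V : Set (ι → K)) : WithBot ℕ∞ :=
  ringKrullDim (MvPolynomial ι K ⧸ vIdeal V)

/-- Irreducibility, via primality of the vanishing ideal. -/
def IsIrred (V : Set (ι → K)) : Prop := (vIdeal V).IsPrime

/-- `V` is an affine cone. -/
def IsCone (V : Set (ι → K)) : Prop := 0 ∈ V ∧ ∀ (c : K), ∀ x ∈ V, c • x ∈ V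

/-- Non-degenerate: the linear span of `V` is the whole ambient space. -/
def Nondeg (V : Set (ι → K)) : Prop := Submodule.span K V = ⊤

/-- Zariski closure: the zero locus of the vanishing ideal. -/
def zcl (S : Set (ι → K)) : Set (ι → K) := {x | ∀ p ∈ vIdeal S, eval x p = 0}

/-- The embedded (Zariski) tangent space of `V` at `x`, as a linear subspace of the
ambient vector space. -/
noncomputable def tangentAt (V : Set (ι → K)) (x : ι → K) : Submodule K (ι → K) where
  carrier := {v | ∀ p ∈ vIdeal V, ∑ i, v i * eval x (pderiv i p) = 0}
  add_mem' := by
    intro a b ha hb p hp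
    have h := ha p hp
    have h' := hb p hp
    simp only [Pi.add_apply, add_mul, Finset.sum_add_distrib, h, h', add_zero]
  zero_mem' := by intro p hp; simp
  smul_mem' := by
    intro c v hv p hp
    have h := hv p hp
    simp only [Pi.smul_apply, smul_eq_mul, mul_assoc, ← Finset.mul_sum, h, mul_zero]

/-- `x` is a smooth point of `V`: the Zariski tangent space has the same dimension
as `V`. -/
def IsSmoothPt (V : Set (ι → K)) (x : ι → K) : Prop :=
  (Module.finrank K (tangentAt V x) : WithBot ℕ∞) = adim V

/-- A cone is smooth as a projective variety if every nonzero point is a smooth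
point. -/
def IsSmoothCone (V : Set (ι → K)) : Prop :=
  ∀ x ∈ V, x ≠ 0 → IsSmoothPt V x

/-!
STATEMENT 18.  Terracini's Lemma (characteristic zero): let `X ⊆ ℙ^r` be an
irreducible projective variety, `x, y` (general, here: arbitrary smooth) points of
`X` and `z` a (general) point of the secant variety `SX` lying on the line
`⟨x, y⟩`.  Then the tangent space `T_z SX` contains both `T_x X` and `T_y X`.
In the cone encoding: the cone of `SX` is the Zariski closure of the union of the
spans `span {x, y}`, `x, y ∈ X`; tangent spaces are the Zariski tangent spaces
`tangentAt` (which agree with the embedded tangent spaces at smooth points and can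
only be larger elsewhere, so the statement for all points faithfully renders the
statement for general points).
-/


section TerraciniAux

private lemma terr_pderiv_bind_affine {K : Type} [Field K] {ι : Type} [DecidableEq ι]
    (a : K) (c : ι → K) (p : MvPolynomial ι K) (i : ι) :
    pderiv i (bind₁ (fun j => MvPolynomial.C a * MvPolynomial.X j + MvPolynomial.C (c j)) p)
      = MvPolynomial.C a *
        bind₁ (fun j => MvPolynomial.C a * MvPolynomial.X j + MvPolynomial.C (c j)) (pderiv i p) := by
  induction p using MvPolynomial.induction_on with
  | C r => simp
  | add p q hp hq => simp only [map_add, hp, hq, mul_add]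
  | mul_X p j hp =>
      simp only [map_mul, bind₁_X_right, pderiv_mul, hp, map_add, pderiv_X, pderiv_C]
      rcases eq_or_ne i j with rfl | hij
      · simp only [Pi.single_eq_same, map_one]; ring
      · simp only [Pi.single_eq_of_ne hij.symm, map_zero]; ring

private lemma terr_derivative_aeval {K : Type} [Field K] {ι : Type} [Fintype ι] [DecidableEq ι]
    (f : ι → Polynomial K) (p : MvPolynomial ι K) :
    Polynomial.derivative (aeval f p)
      = ∑ j, aeval f (pderiv j p) * Polynomial.derivative (f j) := by
  induction p using MvPolynomial.induction_on with
  | C r => simp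
  | add p q hp hq => simp [map_add, hp, hq, add_mul, Finset.sum_add_distrib]
  | mul_X p j hp =>
      simp only [map_mul, aeval_X, Polynomial.derivative_mul, hp, map_add, pderiv_mul, pderiv_X,
        Finset.sum_add_distrib, add_mul, Finset.sum_mul]
      refine congrArg₂ (· + ·) ?_ ?_
      · exact Finset.sum_congr rfl fun k _ => by ring
      · rw [Finset.sum_eq_single j]
        · simp
        · intro k _ hk; simp [Pi.single_eq_of_ne hk.symm]
        · simp

private lemma terr_eval_bind₁ {K : Type} [Field K] {ι : Type}
    (g : ι → MvPolynomial ι K) (w : ι → K) (p : MvPolynomial ι K) :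
    eval w (bind₁ g p) = eval (fun j => eval w (g j)) p := by
  induction p using MvPolynomial.induction_on with
  | C r => simp
  | add p q hp hq => simp [map_add, hp, hq]
  | mul_X p j hp => simp [map_mul, hp]

private lemma terr_polyeval_aeval {K : Type} [Field K] {ι : Type}
    (f : ι → Polynomial K) (t : K) (p : MvPolynomial ι K) :
    Polynomial.eval t (aeval f p) = eval (fun j => Polynomial.eval t (f j)) p := by
  induction p using MvPolynomial.induction_on with
  | C r => simp
  | add p q hp hq => simp [map_add, hp, hq]
  | mul_X p j hp => simp [map_mul, hp]

/-- Key half of Terracini: if `x, y ∈ X` and `z = a • x + b • y`, then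
`T_x X ≤ T_z SX`, where `SX` is the (cone over the) secant variety. -/
private lemma terr_key (r : ℕ)
    (X : Set (Fin (r + 1) → ℂ))
    (SX : Set (Fin (r + 1) → ℂ))
    (hSX : SX = zcl {z | ∃ x ∈ X, ∃ y ∈ X,
      z ∈ (Submodule.span ℂ {x, y} : Set (Fin (r + 1) → ℂ))})
    (x : Fin (r + 1) → ℂ) (hx : x ∈ X) (y : Fin (r + 1) → ℂ) (hy : y ∈ X)
    (a b : ℂ) :
    tangentAt X x ≤ tangentAt SX (a • x + b • y) := by
  intro v hv p hp
  have hU : ∀ x' ∈ X, ∀ y' ∈ X, ∀ u ∈ (Submodule.span ℂ {x', y'} : Set (Fin (r + 1) → ℂ)),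
      eval u p = 0 := by
    intro x' hx' y' hy' u hu
    have hmem : u ∈ SX := by
      rw [hSX]
      intro q hq
      exact hq u ⟨x', hx', y', hy', hu⟩
    exact hp u hmem
  show ∑ i, v i * eval (a • x + b • y) (pderiv i p) = 0
  by_cases ha : a = 0
  · subst ha
    rw [zero_smul, zero_add]
    have hLX : (∑ j, MvPolynomial.C (eval (b • y) (pderiv j p)) * MvPolynomial.X j) ∈ vIdeal X := by
      intro w hw
      set f : Fin (r + 1) → Polynomial ℂ :=
        fun j => Polynomial.C (b * y j) + Polynomial.X * Polynomial.C (w j) with hf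
      have hzero : (aeval f p : Polynomial ℂ) = 0 := by
        apply Polynomial.funext
        intro t
        rw [Polynomial.eval_zero, terr_polyeval_aeval]
        have hfun : (fun j => Polynomial.eval t (f j)) = (t • w + b • y : Fin (r + 1) → ℂ) := by
          funext j
          simp only [hf, Polynomial.eval_add, Polynomial.eval_C, Polynomial.eval_mul,
            Polynomial.eval_X, Pi.add_apply, Pi.smul_apply, smul_eq_mul]
          ring
        rw [hfun]
        exact hU w hw y hy _ (Submodule.mem_span_pair.2 ⟨t, b, rfl⟩)
      have hder := terr_derivative_aeval f p
      rw [hzero, Polynomial.derivative_zero] at hder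
      have h0 := congrArg (Polynomial.eval 0) hder.symm
      rw [Polynomial.eval_zero, Polynomial.eval_finset_sum] at h0
      have hfun0 : (fun k => Polynomial.eval 0 (f k)) = (b • y : Fin (r + 1) → ℂ) := by
        funext k
        simp [hf]
      have h0' : ∑ j, eval (b • y) (pderiv j p) * w j = 0 := by
        rw [← h0]
        apply Finset.sum_congr rfl
        intro j _
        rw [Polynomial.eval_mul, terr_polyeval_aeval, hfun0]
        congr 1
        simp [hf, Polynomial.derivative_mul]
      rw [map_sum]
      simpa [mul_comm] using h0'
    have hvL := hv _ hLX
    have hpd : ∀ i, eval x (pderiv i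
        (∑ j, MvPolynomial.C (eval (b • y) (pderiv j p)) * MvPolynomial.X j))
        = eval (b • y) (pderiv i p) := by
      intro i
      rw [map_sum, Finset.sum_eq_single i]
      · simp [pderiv_C_mul, pderiv_X]
      · intro k _ hk
        simp [pderiv_C_mul, pderiv_X, Pi.single_eq_of_ne hk]
      · simp
    calc ∑ i, v i * eval (b • y) (pderiv i p)
        = ∑ i, v i * eval x (pderiv i
            (∑ j, MvPolynomial.C (eval (b • y) (pderiv j p)) * MvPolynomial.X j)) := by
          exact Finset.sum_congr rfl fun i _ => by rw [hpd i]
      _ = 0 := hvL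
  · have hqX : (bind₁ (fun j => MvPolynomial.C a * MvPolynomial.X j
        + MvPolynomial.C (b * y j)) p) ∈ vIdeal X := by
      intro w hw
      rw [terr_eval_bind₁]
      have hfun : (fun j => eval w (MvPolynomial.C a * MvPolynomial.X j
          + MvPolynomial.C (b * y j))) = (a • w + b • y : Fin (r + 1) → ℂ) := by
        funext j
        simp
      rw [hfun]
      exact hU w hw y hy _ (Submodule.mem_span_pair.2 ⟨a, b, rfl⟩)
    have hvq := hv _ hqX
    have hpd : ∀ i, eval x (pderiv i (bind₁ (fun j => MvPolynomial.C a * MvPolynomial.X j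
        + MvPolynomial.C (b * y j)) p))
        = a * eval (a • x + b • y) (pderiv i p) := by
      intro i
      rw [terr_pderiv_bind_affine a (fun j => b * y j) p i, eval_mul, eval_C, terr_eval_bind₁]
      have hfun : (fun j => eval x (MvPolynomial.C a * MvPolynomial.X j
          + MvPolynomial.C (b * y j))) = (a • x + b • y : Fin (r + 1) → ℂ) := by
        funext j
        simp
      rw [hfun]
    have hmain : a * ∑ i, v i * eval (a • x + b • y) (pderiv i p) = 0 := by
      rw [Finset.mul_sum, ← hvq]
      exact Finset.sum_congr rfl fun i _ => by rw [hpd i]; ring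
    exact (mul_eq_zero.1 hmain).resolve_left ha

end TerraciniAux


theorem terracini_lemma (r : ℕ)
    (X : Set (Fin (r + 1) → ℂ))
    (hXalg : IsAlg X) (hXirr : IsIrred X) (hXcone : IsCone X)
    (SX : Set (Fin (r + 1) → ℂ))
    (hSX : SX = zcl {z | ∃ x ∈ X, ∃ y ∈ X,
      z ∈ (Submodule.span ℂ {x, y} : Set (Fin (r + 1) → ℂ))}) :
    ∀ x ∈ X, x ≠ 0 → IsSmoothPt X x →
    ∀ y ∈ X, y ≠ 0 → IsSmoothPt X y →
    ∀ z ∈ (Submodule.span ℂ {x, y} : Set (Fin (r + 1) → ℂ)), z ≠ 0 →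
      tangentAt X x ≤ tangentAt SX z ∧ tangentAt X y ≤ tangentAt SX z := by
  intro x hx hx0 _ y hy hy0 _ z hz hz0
  obtain ⟨a, b, hab⟩ := Submodule.mem_span_pair.1 hz
  constructor
  · have h := terr_key r X SX hSX x hx y hy a b
    rwa [hab] at h
  · have h := terr_key r X SX hSX y hy x hx b a
    rwa [show (b • y + a • x) = a • x + b • y from add_comm _ _, hab] at h
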